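/- Let A = (A(j,k))_{j,k∈ℤ} be a bi-infinite matrix which, as an operator on ℓ²(ℤ), is bounded, self-adjoint, positive, and invertible. Assume there exist positive constants κ and γ such that |A(j,k)| ≤ κ e^{-γ|j−k|} for every pair of integers j and k. Then there exist positive constants κ̃ and γ̃ such that the matrix entries of the inverse operator satisfy |A^{-1}(s,t)| ≤ κ̃ e^{-γ̃|s−t|} for all s,t ∈ ℤ. -/

import Mathlib

noncomputable section
open MeasureTheory Filter Complex

/-- The Hilbert space `ℓ²(ℤ)` of square-summable complex sequences. -/
abbrev l2Z : Type := lp (fun _ : ℤ => ℂ) 2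

/-- The matrix entry `T(j,k) = ⟨T δ_k, δ_j⟩` of a bounded operator on `ℓ²(ℤ)`, i.e. the
`j`-th coordinate of the image of the `k`-th standard basis vector. -/
def matEntry (T : l2Z →L[ℂ] l2Z) (j k : ℤ) : ℂ := T (lp.single 2 k 1) j

/-- `T` is a positive operator on `ℓ²(ℤ)`: `⟨x, Tx⟩ ≥ 0` for every `x`. -/
def IsPosOp (T : l2Z →L[ℂ] l2Z) : Prop :=
  ∀ v : l2Z, (inner (𝕜 := ℂ) (T v) v).im = 0 ∧ 0 ≤ (inner (𝕜 := ℂ) (T v) v).re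

/-- `Tinv` is a (two-sided) inverse of the bounded operator `T` on `ℓ²(ℤ)`,
i.e. `T` is boundedly invertible with inverse `Tinv`. -/
def IsInvOf (Tinv T : l2Z →L[ℂ] l2Z) : Prop :=
  Tinv.comp T = ContinuousLinearMap.id ℂ l2Z ∧ T.comp Tinv = ContinuousLinearMap.id ℂ l2Z

/-- `T` acts on `ℓ²(ℤ)` as the bi-infinite Gaussian matrix
`A(j,k) = e^{-λ(x_j-x_k)²}`. -/
def IsGaussMatrix (lam : ℝ) (x : ℤ → ℝ) (T : l2Z →L[ℂ] l2Z) : Prop :=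
  ∀ (v : l2Z) (k : ℤ), T v k = ∑' j : ℤ, (Real.exp (-(lam * (x k - x j) ^ 2)) : ℂ) * v j

/-- The Gaussian `g_λ(t) = e^{-λ t²}`, as a complex number. -/
def gauss (lam t : ℝ) : ℂ := Real.exp (-(lam * t ^ 2))

/-- The `l`-th fundamental function `L_l(t) = ∑_k A⁻¹(k,l) e^{-λ(t-x_k)²}`. -/
def fundFn (lam : ℝ) (x : ℤ → ℝ) (Tinv : l2Z →L[ℂ] l2Z) (l : ℤ) (t : ℝ) : ℂ :=
  ∑' k : ℤ, matEntry Tinv k l * gauss lam (t - x k)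

end

noncomputable section St16
open Complex
open scoped ENNReal NNReal

private lemma two_toReal' : ((2 : ℝ≥0∞)).toReal = 2 := by norm_num

private lemma rpow_two_eq (x : ℝ) (hx : 0 ≤ x) : x ^ ((2 : ℝ≥0∞)).toReal = x ^ (2 : ℕ) := by
  rw [two_toReal', show (2:ℝ) = ((2:ℕ):ℝ) by norm_num, Real.rpow_natCast]

private lemma memℓp_two_of {f : ℤ → ℂ} (h : Summable fun i => ‖f i‖ ^ (2:ℕ)) : Memℓp f 2 := by
  apply memℓp_gen
  simpa only [rpow_two_eq _ (norm_nonneg _)] using h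

/-- evaluation at a coordinate, as a CLM. -/
def evalCLM (j : ℤ) : l2Z →L[ℂ] ℂ :=
  LinearMap.mkContinuous
    { toFun := fun v => v j
      map_add' := fun v w => by simp [lp.coeFn_add]
      map_smul' := fun c v => by simp [lp.coeFn_smul] }
    1 (fun v => by
      show ‖(v : ℤ → ℂ) j‖ ≤ 1 * ‖v‖
      simpa using lp.norm_apply_le_norm (by norm_num : (2:ℝ≥0∞) ≠ 0) v j)

@[simp] lemma evalCLM_apply (j : ℤ) (v : l2Z) : evalCLM j v = v j := rfl

lemma hasSum_coord (T : l2Z →L[ℂ] l2Z) (v : l2Z) (j : ℤ) :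
    HasSum (fun k : ℤ => matEntry T j k * v k) (T v j) := by
  have h1 : HasSum (fun k : ℤ => lp.single 2 k (v k)) v :=
    lp.hasSum_single (by norm_num) v
  have h2 := h1.mapL ((evalCLM j).comp T)
  have h3 : ∀ k : ℤ, ((evalCLM j).comp T) (lp.single 2 k (v k)) = matEntry T j k * v k := by
    intro k
    have e1 : (lp.single 2 k (v k) : l2Z) = lp.single 2 k (v k • (1:ℂ)) := by
      norm_num [smul_eq_mul]
    have : (lp.single 2 k (v k) : l2Z) = v k • (lp.single 2 k (1:ℂ) : l2Z) := by
      rw [e1, lp.single_smul]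
    rw [ContinuousLinearMap.comp_apply, this, map_smul]
    simp [matEntry, mul_comm]
  simp only [h3] at h2
  exact h2

section Ops

private lemma C_nonneg (w : ℤ → ℂ) (C : ℝ) (hC : ∀ j, ‖w j‖ ≤ C) : 0 ≤ C :=
  le_trans (norm_nonneg (w 0)) (hC 0)

private lemma diag_mem (w : ℤ → ℂ) (C : ℝ) (hC : ∀ j, ‖w j‖ ≤ C) (v : l2Z) :
    Memℓp (fun j => w j * v j) 2 := by
  apply memℓp_two_of
  have hv : Summable (fun j : ℤ => C ^ (2:ℕ) * ‖(v : ℤ → ℂ) j‖ ^ (2:ℕ)) := by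
    apply Summable.mul_left
    have := (lp.memℓp v).summable (by rw [two_toReal']; norm_num : 0 < ((2:ℝ≥0∞)).toReal)
    simpa only [rpow_two_eq _ (norm_nonneg _)] using this
  refine Summable.of_nonneg_of_le (fun j => by positivity) (fun j => ?_) hv
  rw [norm_mul, mul_pow]
  exact mul_le_mul (pow_le_pow_left₀ (norm_nonneg _) (hC j) 2) (le_refl _)
    (by positivity) (by positivity)

/-- diagonal multiplication operator. -/
def diagOp (w : ℤ → ℂ) (C : ℝ) (hC : ∀ j, ‖w j‖ ≤ C) : l2Z →L[ℂ] l2Z :=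
  LinearMap.mkContinuous
    { toFun := fun v => (⟨fun j => w j * v j, diag_mem w C hC v⟩ : l2Z)
      map_add' := fun v u => by
        apply lp.ext; funext j
        simp [lp.coeFn_add, Pi.add_apply, mul_add]
        rfl
      map_smul' := fun c v => by
        apply lp.ext; funext j
        simp [lp.coeFn_smul, Pi.smul_apply, smul_eq_mul]
        ring }
    C (fun v => by
      have h2 : (0:ℝ) < ((2:ℝ≥0∞)).toReal := by rw [two_toReal']; norm_num
      apply lp.norm_le_of_forall_sum_le h2 (mul_nonneg (C_nonneg w C hC) (norm_nonneg v))
      intro s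
      have hle : ∀ j ∈ s, ‖w j * v j‖ ^ ((2:ℝ≥0∞)).toReal ≤
          C ^ (2:ℕ) * ‖(v : ℤ → ℂ) j‖ ^ ((2:ℝ≥0∞)).toReal := by
        intro j _
        rw [rpow_two_eq _ (norm_nonneg _), rpow_two_eq _ (norm_nonneg _), norm_mul, mul_pow]
        exact mul_le_mul (pow_le_pow_left₀ (norm_nonneg _) (hC j) 2) (le_refl _)
          (by positivity) (by positivity)
      calc ∑ j ∈ s, ‖w j * v j‖ ^ ((2:ℝ≥0∞)).toReal
          ≤ ∑ j ∈ s, C ^ (2:ℕ) * ‖(v : ℤ → ℂ) j‖ ^ ((2:ℝ≥0∞)).toReal :=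
            Finset.sum_le_sum hle
        _ = C ^ (2:ℕ) * ∑ j ∈ s, ‖(v : ℤ → ℂ) j‖ ^ ((2:ℝ≥0∞)).toReal := by
            rw [Finset.mul_sum]
        _ ≤ C ^ (2:ℕ) * ‖v‖ ^ ((2:ℝ≥0∞)).toReal :=
            mul_le_mul_of_nonneg_left (lp.sum_rpow_le_norm_rpow h2 v s) (by positivity)
        _ ≤ (C * ‖v‖) ^ ((2:ℝ≥0∞)).toReal := by
            rw [rpow_two_eq _ (mul_nonneg (C_nonneg w C hC) (norm_nonneg v)),
              rpow_two_eq _ (norm_nonneg v), mul_pow])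

@[simp] lemma diagOp_apply (w : ℤ → ℂ) (C : ℝ) (hC : ∀ j, ‖w j‖ ≤ C) (v : l2Z) (j : ℤ) : (diagOp w C hC v) j = w j * v j := rfl

lemma diagOp_norm (w : ℤ → ℂ) (C : ℝ) (hC : ∀ j, ‖w j‖ ≤ C) : ‖diagOp w C hC‖ ≤ C :=
  LinearMap.mkContinuous_norm_le _ (C_nonneg w C hC) _

private lemma shift_mem (n : ℤ) (v : l2Z) : Memℓp (fun j => v (j - n)) 2 := by
  apply memℓp_two_of
  have := (lp.memℓp v).summable (by rw [two_toReal']; norm_num : 0 < ((2:ℝ≥0∞)).toReal)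
  have h : Summable (fun j : ℤ => ‖(v : ℤ → ℂ) j‖ ^ (2:ℕ)) := by
    simpa only [rpow_two_eq _ (norm_nonneg _)] using this
  exact ((Equiv.subRight n).summable_iff (f := fun j : ℤ => ‖(v : ℤ → ℂ) j‖ ^ (2:ℕ))).2 h

/-- shift operator `v ↦ (j ↦ v (j - n))`. -/
def shiftOp (n : ℤ) : l2Z →L[ℂ] l2Z :=
  LinearMap.mkContinuous
    { toFun := fun v => (⟨fun j => v (j - n), shift_mem n v⟩ : l2Z)
      map_add' := fun v u => by
        apply lp.ext; funext j
        simp [lp.coeFn_add, Pi.add_apply]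
        rfl
      map_smul' := fun c v => by
        apply lp.ext; funext j
        simp [lp.coeFn_smul, Pi.smul_apply] }
    1 (fun v => by
      have h2 : (0:ℝ) < ((2:ℝ≥0∞)).toReal := by rw [two_toReal']; norm_num
      rw [one_mul]
      apply lp.norm_le_of_tsum_le h2 (norm_nonneg v)
      have key : (∑' j : ℤ, ‖(v : ℤ → ℂ) (j - n)‖ ^ ((2:ℝ≥0∞)).toReal)
          = ‖v‖ ^ ((2:ℝ≥0∞)).toReal :=
        ((Equiv.subRight n).tsum_eq
          (fun j : ℤ => ‖(v : ℤ → ℂ) j‖ ^ ((2:ℝ≥0∞)).toReal)).trans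
          (lp.norm_rpow_eq_tsum h2 v).symm
      exact le_of_eq key)

@[simp] lemma shiftOp_apply (n : ℤ) (v : l2Z) (j : ℤ) : (shiftOp n v) j = v (j - n) := rfl

lemma shiftOp_norm (n : ℤ) : ‖shiftOp n‖ ≤ 1 :=
  LinearMap.mkContinuous_norm_le _ zero_le_one _

/-- the operator `v ↦ (j ↦ w j * v (j - n))`. -/
def bandOp (w : ℤ → ℂ) (C : ℝ) (hC : ∀ j, ‖w j‖ ≤ C) (n : ℤ) : l2Z →L[ℂ] l2Z := (diagOp w C hC).comp (shiftOp n)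

@[simp] lemma bandOp_apply (w : ℤ → ℂ) (C : ℝ) (hC : ∀ j, ‖w j‖ ≤ C) (n : ℤ) (v : l2Z) (j : ℤ) :
    (bandOp w C hC n v) j = w j * v (j - n) := rfl

lemma bandOp_norm (w : ℤ → ℂ) (C : ℝ) (hC : ∀ j, ‖w j‖ ≤ C) (n : ℤ) : ‖bandOp w C hC n‖ ≤ C := by
  calc ‖bandOp w C hC n‖ ≤ ‖diagOp w C hC‖ * ‖shiftOp n‖ := ContinuousLinearMap.opNorm_comp_le _ _
    _ ≤ C * 1 := mul_le_mul (diagOp_norm w C hC) (shiftOp_norm n) (norm_nonneg _)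
        (C_nonneg w C hC)
    _ = C := mul_one C

end Ops

section Scalar

lemma abs_exp_sub_one_le' (x : ℝ) : |Real.exp x - 1| ≤ |x| * Real.exp |x| := by
  rcases le_total 0 x with hx | hx
  · rw [_root_.abs_of_nonneg hx, _root_.abs_of_nonneg (by linarith [Real.one_le_exp hx] : (0:ℝ) ≤ Real.exp x - 1)]
    have h1 := Real.add_one_le_exp (-x)
    have h2 : (1 - x) * Real.exp x ≤ 1 := by
      have := mul_le_mul_of_nonneg_right h1 (Real.exp_pos x).le
      rwa [← Real.exp_add, neg_add_cancel, Real.exp_zero, neg_add_eq_sub] at this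
    nlinarith [Real.exp_pos x]
  · rw [_root_.abs_of_nonpos hx, _root_.abs_of_nonpos (by linarith [Real.exp_le_one_iff.2 hx] : Real.exp x - 1 ≤ 0)]
    have h1 := Real.add_one_le_exp x
    have h2 : (1:ℝ) ≤ Real.exp (-x) := Real.one_le_exp (by linarith)
    nlinarith
  
lemma mul_exp_mono {a b : ℝ} (ha : 0 ≤ a) (hab : a ≤ b) : a * Real.exp a ≤ b * Real.exp b :=
  mul_le_mul hab (Real.exp_le_exp.2 hab) (Real.exp_pos a).le (le_trans ha hab)

lemma summable_decay {b : ℝ} (hb : 0 < b) :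
    Summable (fun n : ℤ => |(n:ℝ)| * Real.exp (-b * |(n:ℝ)|)) := by
  have hr : Real.exp (-b) < 1 := Real.exp_lt_one_iff.2 (by linarith)
  have hr' : ‖Real.exp (-b)‖ < 1 := by rwa [Real.norm_eq_abs, _root_.abs_of_pos (Real.exp_pos _)]
  have hnat : Summable (fun n : ℕ => (n:ℝ) * Real.exp (-b) ^ n) := by
    simpa using summable_pow_mul_geometric_of_norm_lt_one 1 hr'
  have hnat' : Summable (fun n : ℕ => |((n:ℤ):ℝ)| * Real.exp (-b * |((n:ℤ):ℝ)|)) := by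
    refine hnat.congr fun n => ?_
    rw [← Real.exp_nat_mul]
    push_cast
    rw [_root_.abs_of_nonneg (by positivity : (0:ℝ) ≤ (n:ℝ))]
    ring_nf
  have hneg : Summable (fun n : ℕ => |(((-(n:ℕ):ℤ)):ℝ)| * Real.exp (-b * |(((-(n:ℕ):ℤ)):ℝ)|)) := by
    refine hnat'.congr fun n => ?_
    push_cast
    rw [abs_neg]
  exact Summable.of_nat_of_neg hnat' hneg

end Scalar

section Key

lemma abs_min_sub_min_le (a b c : ℝ) : |min a c - min b c| ≤ |a - b| := by
  rcases min_cases a c with ⟨e1, _⟩ | ⟨e1, _⟩ <;> rcases min_cases b c with ⟨e2, _⟩ | ⟨e2, _⟩ <;>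
    rw [e1, e2, abs_le] <;> constructor <;>
    linarith [le_abs_self (a - b), neg_abs_le (a - b), abs_nonneg (a - b)]

lemma clm_id_apply {T U : l2Z →L[ℂ] l2Z} (h : T.comp U = ContinuousLinearMap.id ℂ l2Z)
    (v : l2Z) : T (U v) = v := by
  have := ContinuousLinearMap.ext_iff.1 h v
  simpa using this

set_option maxHeartbeats 1000000 in
lemma key (A Ainv : l2Z →L[ℂ] l2Z)
    (h1 : Ainv.comp A = ContinuousLinearMap.id ℂ l2Z)
    (h2 : A.comp Ainv = ContinuousLinearMap.id ℂ l2Z)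
    (κ γ θ : ℝ) (hκ : 0 < κ) (hγ : 0 < γ) (hθ0 : 0 < θ) (hθγ : θ ≤ γ / 2)
    (hA : ∀ j k : ℤ, ‖matEntry A j k‖ ≤ κ * Real.exp (-γ * |(j : ℝ) - (k : ℝ)|))
    (hsmall : ‖Ainv‖ * (θ * κ * ∑' n : ℤ, |(n : ℝ)| * Real.exp (-(γ / 2) * |(n : ℝ)|)) ≤ 1 / 2)
    (m : ℤ → ℝ) (hm0 : ∀ j, 0 ≤ m j)
    (hmLip : ∀ j k : ℤ, |m j - m k| ≤ |(j : ℝ) - (k : ℝ)|)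
    (D : ℝ) (hmD : ∀ j, m j ≤ D)
    (s t : ℤ) (hmt : m t = 0) (hms : m s = |(s : ℝ) - (t : ℝ)|) :
    Real.exp (θ * |(s : ℝ) - (t : ℝ)|) * ‖matEntry Ainv s t‖ ≤ 2 * ‖Ainv‖ := by
  set S : ℝ := ∑' n : ℤ, |(n : ℝ)| * Real.exp (-(γ / 2) * |(n : ℝ)|) with hSdef
  -- the weights
  set wp : ℤ → ℂ := fun j => ((Real.exp (θ * m j) : ℝ) : ℂ) with hwp_def
  set wm : ℤ → ℂ := fun j => ((Real.exp (-(θ * m j)) : ℝ) : ℂ) with hwm_def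
  have hwp : ∀ j, ‖wp j‖ ≤ Real.exp (θ * D) := by
    intro j
    simp only [hwp_def, Complex.norm_real, Real.norm_eq_abs,
      _root_.abs_of_pos (Real.exp_pos _)]
    exact Real.exp_le_exp.2 (by nlinarith [hmD j, hθ0.le])
  have hwm : ∀ j, ‖wm j‖ ≤ 1 := by
    intro j
    simp only [hwm_def, Complex.norm_real, Real.norm_eq_abs,
      _root_.abs_of_pos (Real.exp_pos _)]
    exact Real.exp_le_one_iff.2 (by nlinarith [hm0 j, hθ0.le])
  set M : l2Z →L[ℂ] l2Z := diagOp wp (Real.exp (θ * D)) hwp with hM_def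
  set Minv : l2Z →L[ℂ] l2Z := diagOp wm 1 hwm with hMinv_def
  have hwpm : ∀ j, wp j * wm j = 1 := by
    intro j
    rw [hwp_def, hwm_def, ← Complex.ofReal_mul, ← Real.exp_add]
    norm_num
  have hMMinv : ∀ v : l2Z, M (Minv v) = v := by
    intro v
    apply lp.ext; funext j
    show wp j * (wm j * v j) = v j
    rw [← mul_assoc, hwpm, one_mul]
  have hMinvM : ∀ v : l2Z, Minv (M v) = v := by
    intro v
    apply lp.ext; funext j
    show wm j * (wp j * v j) = v j
    rw [← mul_assoc, mul_comm (wm j), hwpm, one_mul]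
  -- the band kernels
  set c : ℤ → ℤ → ℂ :=
    fun n j => ((Real.exp (θ * m j - θ * m (j - n)) - 1 : ℝ) : ℂ) * matEntry A j (j - n)
    with hc_def
  set hh : ℤ → ℝ := fun n => θ * κ * (|(n : ℝ)| * Real.exp (-(γ / 2) * |(n : ℝ)|)) with hh_def
  have hcast : ∀ j n : ℤ, ((j : ℝ) - ((j - n : ℤ) : ℝ)) = (n : ℝ) := by
    intro j n; push_cast; ring
  have hc : ∀ n j, ‖c n j‖ ≤ hh n := by
    intro n j
    have hx : |θ * m j - θ * m (j - n)| ≤ θ * |(n : ℝ)| := by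
      rw [← mul_sub, abs_mul, _root_.abs_of_pos hθ0]
      have := hmLip j (j - n)
      rw [hcast j n] at this
      exact mul_le_mul_of_nonneg_left this hθ0.le
    have h1' : |Real.exp (θ * m j - θ * m (j - n)) - 1| ≤
        θ * |(n : ℝ)| * Real.exp (θ * |(n : ℝ)|) := by
      refine le_trans (abs_exp_sub_one_le' _) ?_
      exact mul_exp_mono (abs_nonneg _) hx
    have h2' : ‖matEntry A j (j - n)‖ ≤ κ * Real.exp (-γ * |(n : ℝ)|) := by
      have := hA j (j - n)
      rwa [hcast j n] at this
    rw [hc_def]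
    simp only [norm_mul, Complex.norm_real, Real.norm_eq_abs]
    calc |Real.exp (θ * m j - θ * m (j - n)) - 1| * ‖matEntry A j (j - n)‖
        ≤ (θ * |(n : ℝ)| * Real.exp (θ * |(n : ℝ)|)) * (κ * Real.exp (-γ * |(n : ℝ)|)) := by
          apply mul_le_mul h1' h2' (norm_nonneg _)
          positivity
      _ = θ * κ * (|(n : ℝ)| * Real.exp (θ * |(n : ℝ)| + -γ * |(n : ℝ)|)) := by
          rw [Real.exp_add]; ring
      _ ≤ hh n := by
          rw [hh_def]
          simp only
          apply mul_le_mul_of_nonneg_left _ (by positivity)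
          apply mul_le_mul_of_nonneg_left _ (abs_nonneg _)
          exact Real.exp_le_exp.2 (by nlinarith [abs_nonneg ((n:ℝ))])
  have hhsum : Summable hh := (summable_decay (by linarith : (0:ℝ) < γ / 2)).mul_left (θ * κ)
  set Bn : ℤ → (l2Z →L[ℂ] l2Z) := fun n => bandOp (c n) (hh n) (hc n) n with hBn_def
  have hBn_norm : ∀ n, ‖Bn n‖ ≤ hh n := fun n => bandOp_norm (c n) (hh n) (hc n) n
  have hBsummable : Summable Bn :=
    Summable.of_norm_bounded hhsum hBn_norm
  set B' : l2Z →L[ℂ] l2Z := ∑' n, Bn n with hB'_def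
  have hB'sum : HasSum Bn B' := hBsummable.hasSum
  have hnormsum : Summable (fun n => ‖Bn n‖) :=
    Summable.of_nonneg_of_le (fun n => norm_nonneg _) hBn_norm hhsum
  have hB'norm : ‖B'‖ ≤ θ * κ * S := by
    calc ‖B'‖ ≤ ∑' n, ‖Bn n‖ := norm_tsum_le_tsum_norm hnormsum
      _ ≤ ∑' n, hh n := Summable.tsum_le_tsum hBn_norm hnormsum hhsum
      _ = θ * κ * S := by rw [hh_def, hSdef]; exact tsum_mul_left
  set G : l2Z →L[ℂ] l2Z := M.comp (A.comp Minv) with hG_def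
  -- B' = G - A
  have hBG : B' = G - A := by
    refine ContinuousLinearMap.ext fun v => ?_
    apply lp.ext; funext j
    have hsA : HasSum (fun n => (Bn n v) j) ((B' v) j) :=
      (hB'sum.mapL (ContinuousLinearMap.apply ℂ l2Z v)).mapL (evalCLM j)
    have hv1 : HasSum (fun k : ℤ => wp j * (matEntry A j k * (wm k * v k)))
        (wp j * ((A (Minv v)) j)) := (hasSum_coord A (Minv v) j).mul_left (wp j)
    have hv2 : HasSum (fun k : ℤ => matEntry A j k * v k) ((A v) j) := hasSum_coord A v j
    have hsub := hv1.sub hv2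
    set F : ℤ → ℂ := fun k => wp j * (matEntry A j k * (wm k * v k)) - matEntry A j k * v k
      with hF_def
    have hre0 : HasSum (F ∘ (Equiv.subLeft j)) (wp j * ((A (Minv v)) j) - (A v) j) :=
      ((Equiv.subLeft j).hasSum_iff).2 hsub
    have hre : HasSum
        (fun n : ℤ => wp j * (matEntry A j (j - n) * (wm (j - n) * v (j - n)))
          - matEntry A j (j - n) * v (j - n))
        (wp j * ((A (Minv v)) j) - (A v) j) := hre0
    have hterm : ∀ n : ℤ, (Bn n v) j =
        wp j * (matEntry A j (j - n) * (wm (j - n) * v (j - n)))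
          - matEntry A j (j - n) * v (j - n) := by
      intro n
      show c n j * v (j - n) = _
      have hexp : wp j * wm (j - n)
          = ((Real.exp (θ * m j - θ * m (j - n)) : ℝ) : ℂ) := by
        rw [hwp_def, hwm_def, ← Complex.ofReal_mul, ← Real.exp_add, ← sub_eq_add_neg]
      calc c n j * v (j - n)
          = (wp j * wm (j - n) - 1) * matEntry A j (j - n) * v (j - n) := by
            rw [hc_def, hexp]; push_cast; ring
        _ = _ := by ring
    have hfinal : (B' v) j = wp j * ((A (Minv v)) j) - (A v) j := by
      refine hsA.unique ?_
      exact hre.congr_fun fun n => hterm n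
    rw [hfinal]
    rfl
  set X : l2Z →L[ℂ] l2Z := M.comp (Ainv.comp Minv) with hX_def
  have hGX : ∀ v, G (X v) = v := by
    intro v
    show M (A (Minv (M (Ainv (Minv v))))) = v
    rw [hMinvM, clm_id_apply h2, hMMinv]
  -- X = Ainv - Ainv ∘ (G - A) ∘ X
  have hXeq : X = Ainv - Ainv.comp ((G - A).comp X) := by
    refine ContinuousLinearMap.ext fun v => ?_
    have e1 : A (X v) = v - (G - A) (X v) := by
      have : (G - A) (X v) = G (X v) - A (X v) := rfl
      rw [this, hGX]
      abel
    calc X v = Ainv (A (X v)) := (clm_id_apply h1 (X v)).symm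
      _ = Ainv (v - (G - A) (X v)) := by rw [e1]
      _ = Ainv v - Ainv ((G - A) (X v)) := by rw [map_sub]
      _ = (Ainv - Ainv.comp ((G - A).comp X)) v := rfl
  have hXnorm : ‖X‖ ≤ 2 * ‖Ainv‖ := by
    have hb : ‖Ainv.comp ((G - A).comp X)‖ ≤ ‖Ainv‖ * (‖G - A‖ * ‖X‖) := by
      calc ‖Ainv.comp ((G - A).comp X)‖ ≤ ‖Ainv‖ * ‖(G - A).comp X‖ :=
            ContinuousLinearMap.opNorm_comp_le _ _
        _ ≤ ‖Ainv‖ * (‖G - A‖ * ‖X‖) := by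
            apply mul_le_mul_of_nonneg_left (ContinuousLinearMap.opNorm_comp_le _ _)
              (norm_nonneg _)
    have hGA : ‖G - A‖ ≤ θ * κ * S := by rw [← hBG]; exact hB'norm
    have hX1 : ‖X‖ ≤ ‖Ainv‖ + ‖Ainv‖ * (‖G - A‖ * ‖X‖) := by
      calc ‖X‖ = ‖Ainv - Ainv.comp ((G - A).comp X)‖ := by rw [← hXeq]
        _ ≤ ‖Ainv‖ + ‖Ainv.comp ((G - A).comp X)‖ := norm_sub_le _ _
        _ ≤ ‖Ainv‖ + ‖Ainv‖ * (‖G - A‖ * ‖X‖) := by linarith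
    nlinarith [norm_nonneg X, norm_nonneg (G - A), norm_nonneg Ainv,
      mul_le_mul_of_nonneg_right (mul_le_mul_of_nonneg_left hGA (norm_nonneg Ainv))
        (norm_nonneg X),
      mul_le_mul_of_nonneg_right hsmall (norm_nonneg X)]
  -- entries of X
  have hMinvδ : Minv (lp.single 2 t 1) = (lp.single 2 t 1 : l2Z) := by
    apply lp.ext; funext i
    show wm i * (lp.single 2 t (1:ℂ) : l2Z) i = (lp.single 2 t (1:ℂ) : l2Z) i
    by_cases hit : i = t
    · subst hit
      rw [lp.single_apply_self, hwm_def]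
      simp [hmt]
    · rw [lp.single_apply_ne 2 t _ hit, mul_zero]
  have hentry : matEntry X s t
      = ((Real.exp (θ * |(s:ℝ) - (t:ℝ)|) : ℝ) : ℂ) * matEntry Ainv s t := by
    show (M (Ainv (Minv (lp.single 2 t 1)))) s = _
    rw [hMinvδ]
    show wp s * (Ainv (lp.single 2 t 1)) s = _
    simp only [hwp_def]
    rw [hms]
    rfl
  have hXst : ‖matEntry X s t‖ ≤ 2 * ‖Ainv‖ := by
    have hsingle : ‖(lp.single 2 t (1:ℂ) : l2Z)‖ = 1 := by
      have := lp.norm_single (p := 2) (E := fun _ : ℤ => ℂ) (by norm_num)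
        t (1:ℂ)
      simpa using this
    calc ‖matEntry X s t‖ ≤ ‖X (lp.single 2 t 1)‖ :=
          lp.norm_apply_le_norm (by norm_num) _ s
      _ ≤ ‖X‖ * ‖(lp.single 2 t (1:ℂ) : l2Z)‖ := X.le_opNorm _
      _ = ‖X‖ := by rw [hsingle, mul_one]
      _ ≤ 2 * ‖Ainv‖ := hXnorm
  calc Real.exp (θ * |(s:ℝ) - (t:ℝ)|) * ‖matEntry Ainv s t‖
      = ‖matEntry X s t‖ := by
        rw [hentry, norm_mul, Complex.norm_real, Real.norm_eq_abs,
          _root_.abs_of_pos (Real.exp_pos _)]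
    _ ≤ 2 * ‖Ainv‖ := hXst

end Key
end St16

open MeasureTheory Filter Complex in
/-- If a bi-infinite matrix `A`, as a bounded operator on `ℓ²(ℤ)`, is self-adjoint,
positive, and invertible (with bounded inverse `Ainv`), and its entries satisfy
`|A(j,k)| ≤ κ e^{-γ|j-k|}`, then the entries of the inverse satisfy
`|A⁻¹(s,t)| ≤ κ̃ e^{-γ̃|s-t|}` for some positive constants `κ̃, γ̃`. -/
theorem statement16 (A Ainv : l2Z →L[ℂ] l2Z) (hsa : IsSelfAdjoint A) (hpos : IsPosOp A)
    (hinv : IsInvOf Ainv A) (κ γ : ℝ) (hκ : 0 < κ) (hγ : 0 < γ)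
    (hA : ∀ j k : ℤ, ‖matEntry A j k‖ ≤ κ * Real.exp (-γ * |(j : ℝ) - (k : ℝ)|)) :
    ∃ κ' γ' : ℝ, 0 < κ' ∧ 0 < γ' ∧
      ∀ s t : ℤ, ‖matEntry Ainv s t‖ ≤ κ' * Real.exp (-γ' * |(s : ℝ) - (t : ℝ)|) := by
  obtain ⟨h1, h2⟩ := hinv
  set S : ℝ := ∑' n : ℤ, |(n : ℝ)| * Real.exp (-(γ / 2) * |(n : ℝ)|) with hS
  have hS0 : 0 ≤ S := tsum_nonneg fun n => by positivity
  set θ : ℝ := min (γ / 2) (1 / (2 * (κ * S + 1) * (‖Ainv‖ + 1))) with hθ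
  have hθ0 : 0 < θ := lt_min (by linarith) (by positivity)
  have hθγ : θ ≤ γ / 2 := min_le_left _ _
  have hsmall : ‖Ainv‖ * (θ * κ * S) ≤ 1 / 2 := by
    have hθle : θ ≤ 1 / (2 * (κ * S + 1) * (‖Ainv‖ + 1)) := min_le_right _ _
    have hd : (0:ℝ) < 2 * (κ * S + 1) * (‖Ainv‖ + 1) := by positivity
    rw [le_div_iff₀ hd] at hθle
    have hN : (0:ℝ) ≤ ‖Ainv‖ := norm_nonneg _
    nlinarith [mul_nonneg (mul_nonneg hκ.le hS0) hN, hθ0.le, mul_nonneg hκ.le hS0]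
  refine ⟨2 * ‖Ainv‖ + 1, θ, by positivity, hθ0, ?_⟩
  intro s t
  set m : ℤ → ℝ := fun j => min |(j : ℝ) - (t : ℝ)| |(s : ℝ) - (t : ℝ)| with hm
  have hm0 : ∀ j, 0 ≤ m j := fun j => le_min (abs_nonneg _) (abs_nonneg _)
  have hmLip : ∀ j k : ℤ, |m j - m k| ≤ |(j : ℝ) - (k : ℝ)| := by
    intro j k
    refine le_trans (abs_min_sub_min_le _ _ _) ?_
    calc |(|(j:ℝ) - (t:ℝ)|) - (|(k:ℝ) - (t:ℝ)|)|
        ≤ |((j:ℝ) - (t:ℝ)) - ((k:ℝ) - (t:ℝ))| := abs_abs_sub_abs_le_abs_sub _ _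
      _ = |(j:ℝ) - (k:ℝ)| := by ring_nf
  have hmt : m t = 0 := by
    simp only [hm, sub_self, abs_zero]
    exact min_eq_left (abs_nonneg _)
  have hms : m s = |(s : ℝ) - (t : ℝ)| := by
    simp only [hm, min_self]
  have hmD : ∀ j, m j ≤ |(s : ℝ) - (t : ℝ)| := fun j => min_le_right _ _
  have hkey := key A Ainv h1 h2 κ γ θ hκ hγ hθ0 hθγ hA hsmall m hm0 hmLip
    (|(s : ℝ) - (t : ℝ)|) hmD s t hmt hms
  have hexp : (0:ℝ) < Real.exp (θ * |(s:ℝ) - (t:ℝ)|) := Real.exp_pos _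
  have hfin : ‖matEntry Ainv s t‖ ≤ 2 * ‖Ainv‖ * Real.exp (-θ * |(s:ℝ) - (t:ℝ)|) := by
    rw [neg_mul, Real.exp_neg, mul_comm (2 * ‖Ainv‖), ← div_eq_inv_mul, le_div_iff₀ hexp]
    calc ‖matEntry Ainv s t‖ * Real.exp (θ * |(s:ℝ) - (t:ℝ)|)
        = Real.exp (θ * |(s:ℝ) - (t:ℝ)|) * ‖matEntry Ainv s t‖ := by ring
      _ ≤ 2 * ‖Ainv‖ := hkey
  refine le_trans hfin ?_
  have : (0:ℝ) < Real.exp (-θ * |(s:ℝ) - (t:ℝ)|) := Real.exp_pos _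
  nlinarith [norm_nonneg Ainv]
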